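/- Let $\mathcal{R}_\Theta := \mathbb{F}_2[X_1,X_2]/(X_1^2X_2 + X_1X_2^2,\; X_1^2 + X_2^2 + X_1X_2)$ and consider the $\mathbb{F}_2$-linear maps $d^0 : \mathcal{R}_\Theta \to \mathcal{R}_\Theta \oplus \mathcal{R}_\Theta$, $d^0(r) = (X_1 r,\, X_2 r)$, and $d^1 : \mathcal{R}_\Theta \oplus \mathcal{R}_\Theta \to \mathcal{R}_\Theta$, $d^1(a,b) = X_2 a + X_1 b$. Then $d^1 \circ d^0 = 0$ and $\dim_{\mathbb{F}_2} \ker d^0 = 1$, $\dim_{\mathbb{F}_2} (\ker d^1/\operatorname{im} d^0) = 2$, $\dim_{\mathbb{F}_2} (\mathcal{R}_\Theta/\operatorname{im} d^1) = 1$; in particular the total homology has $\mathbb{F}_2$-dimension 4. -/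

import Mathlib

open MvPolynomial

noncomputable section

/-- The defining ideal of the mod-2 graph ring of the planar theta graph. -/
abbrev thetaIdealF : Ideal (MvPolynomial (Fin 2) (ZMod 2)) :=
  Ideal.span {X 0 ^ 2 * X 1 + X 0 * X 1 ^ 2, X 0 ^ 2 + X 1 ^ 2 + X 0 * X 1}

/-- The graph ring `𝓡_Θ = 𝔽₂[X₁,X₂]/(X₁²X₂ + X₁X₂², X₁² + X₂² + X₁X₂)` of the
planar theta graph over the two-element field. -/
abbrev RThetaF := MvPolynomial (Fin 2) (ZMod 2) ⧸ thetaIdealF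

/-- The residue class of `X₁` in `𝓡_Θ`. -/
abbrev RThetaF.x1 : RThetaF := Ideal.Quotient.mk thetaIdealF (X 0)

/-- The residue class of `X₂` in `𝓡_Θ`. -/
abbrev RThetaF.x2 : RThetaF := Ideal.Quotient.mk thetaIdealF (X 1)

/-- The first Koszul differential `d⁰(r) = (X₁ r, X₂ r)`. -/
def kosZeroF : RThetaF →ₗ[ZMod 2] RThetaF × RThetaF :=
  (LinearMap.mulLeft (ZMod 2) RThetaF.x1).prod (LinearMap.mulLeft (ZMod 2) RThetaF.x2)

/-- The second Koszul differential `d¹(a, b) = X₂ a + X₁ b`. -/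
def kosOneF : RThetaF × RThetaF →ₗ[ZMod 2] RThetaF :=
  (LinearMap.mulLeft (ZMod 2) RThetaF.x2).comp (LinearMap.fst (ZMod 2) RThetaF RThetaF) +
    (LinearMap.mulLeft (ZMod 2) RThetaF.x1).comp (LinearMap.snd (ZMod 2) RThetaF RThetaF)

abbrev V6 := Fin 6 → ZMod 2
def eV (i : Fin 6) : V6 := Pi.single i 1
def nfab : ℕ → ℕ → V6
  | 0, 0 => eV 0
  | 1, 0 => eV 1
  | 0, 1 => eV 2
  | 2, 0 => eV 3
  | 1, 1 => eV 4
  | 0, 2 => eV 3 + eV 4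
  | 2, 1 => eV 5
  | 1, 2 => eV 5
  | _, _ => 0
lemma L1 (m n : ℕ) : nfab (m+2) (n+1) + nfab (m+1) (n+2) = 0 := by
  rcases m with _|_|_|m <;> rcases n with _|_|_|n <;>
    first
      | decide
      | exact (show (0:V6) + 0 = 0 by simp)
lemma L2 (m n : ℕ) : nfab (m+2) n + nfab m (n+2) + nfab (m+1) (n+1) = 0 := by
  rcases m with _|_|_|m <;> rcases n with _|_|_|n <;>
    first
      | decide
      | exact (show (0:V6) + 0 + 0 = 0 by simp)
def nfd (d : Fin 2 →₀ ℕ) : V6 := nfab (d 0) (d 1)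
def dva : Fin 6 → ℕ := ![0,1,0,2,1,2]
def dvb : Fin 6 → ℕ := ![0,0,1,0,1,1]
def dv (i : Fin 6) : Fin 2 →₀ ℕ := Finsupp.single 0 (dva i) + Finsupp.single 1 (dvb i)
def monoP (i : Fin 6) : MvPolynomial (Fin 2) (ZMod 2) := monomial (dv i) 1
def Ppoly : V6 →ₗ[ZMod 2] MvPolynomial (Fin 2) (ZMod 2) :=
  (Pi.basisFun (ZMod 2) (Fin 6)).constr (ZMod 2) monoP
def mkL : MvPolynomial (Fin 2) (ZMod 2) →ₗ[ZMod 2] RThetaF :=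
  (Ideal.Quotient.mkₐ (ZMod 2) thetaIdealF).toLinearMap
def ψ : V6 →ₗ[ZMod 2] RThetaF := mkL.comp Ppoly
def φ : MvPolynomial (Fin 2) (ZMod 2) →ₗ[ZMod 2] V6 :=
  (MvPolynomial.basisMonomials (Fin 2) (ZMod 2)).constr (ZMod 2) nfd

lemma phi_monomial (d : Fin 2 →₀ ℕ) (c : ZMod 2) : φ (monomial d c) = c • nfd d := by
  have h1 : monomial d c = c • monomial d 1 := by rw [smul_monomial, smul_eq_mul, mul_one]
  rw [h1, map_smul, φ]
  congr 1
  have := Module.Basis.constr_basis (MvPolynomial.basisMonomials (Fin 2) (ZMod 2)) (ZMod 2) nfd d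
  simpa using this

lemma Ppoly_single (i : Fin 6) : Ppoly (Pi.single i 1) = monoP i := by
  rw [← Pi.basisFun_apply]
  exact Module.Basis.constr_basis (Pi.basisFun (ZMod 2) (Fin 6)) (ZMod 2) monoP i

lemma psi_single (i : Fin 6) : ψ (Pi.single i 1) = Ideal.Quotient.mk thetaIdealF (monoP i) := by
  simp [ψ, Ppoly_single, mkL]

lemma nfd_dv (i : Fin 6) : nfd (dv i) = eV i := by
  fin_cases i <;> simp [nfd, dv] <;> decide

lemma phi_Ppoly (a : V6) : φ (Ppoly a) = a := by
  have h : (φ.comp Ppoly) = LinearMap.id := by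
    apply (Pi.basisFun (ZMod 2) (Fin 6)).ext
    intro i
    simp only [LinearMap.comp_apply, Pi.basisFun_apply, Ppoly_single, LinearMap.id_apply, monoP]
    rw [phi_monomial, one_smul, nfd_dv]
    fin_cases i <;> rfl
  exact DFunLike.congr_fun h a
lemma Xab (a b : ℕ) : (X 0 ^ a * X 1 ^ b : MvPolynomial (Fin 2) (ZMod 2)) =
    monomial (Finsupp.single 0 a + Finsupp.single 1 b) 1 := by
  simp [X_pow_eq_monomial, monomial_mul]

lemma g1_eq : (X 0 ^ 2 * X 1 + X 0 * X 1 ^ 2 : MvPolynomial (Fin 2) (ZMod 2)) =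
    monomial (Finsupp.single 0 2 + Finsupp.single 1 1) 1 +
      monomial (Finsupp.single 0 1 + Finsupp.single 1 2) 1 := by
  rw [← Xab 2 1, ← Xab 1 2]; ring

lemma g2_eq : (X 0 ^ 2 + X 1 ^ 2 + X 0 * X 1 : MvPolynomial (Fin 2) (ZMod 2)) =
    monomial (Finsupp.single 0 2 + Finsupp.single 1 0) 1 +
      monomial (Finsupp.single 0 0 + Finsupp.single 1 2) 1 +
      monomial (Finsupp.single 0 1 + Finsupp.single 1 1) 1 := by
  rw [← Xab 2 0, ← Xab 0 2, ← Xab 1 1]; ring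

lemma phi_mul_g1 (p : MvPolynomial (Fin 2) (ZMod 2)) :
    φ (p * (X 0 ^ 2 * X 1 + X 0 * X 1 ^ 2)) = 0 := by
  induction p using MvPolynomial.induction_on' with
  | monomial d c =>
    rw [g1_eq, mul_add, monomial_mul, monomial_mul, map_add, phi_monomial, phi_monomial,
      ← smul_add]
    have : nfd (d + (Finsupp.single 0 2 + Finsupp.single 1 1)) +
        nfd (d + (Finsupp.single 0 1 + Finsupp.single 1 2)) = 0 := by
      simp only [nfd, Finsupp.add_apply, Finsupp.single_apply]
      simpa using L1 (d 0) (d 1)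
    rw [this, smul_zero]
  | add p q hp hq => rw [add_mul, map_add, hp, hq, add_zero]

lemma phi_mul_g2 (p : MvPolynomial (Fin 2) (ZMod 2)) :
    φ (p * (X 0 ^ 2 + X 1 ^ 2 + X 0 * X 1)) = 0 := by
  induction p using MvPolynomial.induction_on' with
  | monomial d c =>
    rw [g2_eq, mul_add, mul_add, monomial_mul, monomial_mul, monomial_mul, map_add, map_add,
      phi_monomial, phi_monomial, phi_monomial, ← smul_add, ← smul_add]
    have : nfd (d + (Finsupp.single 0 2 + Finsupp.single 1 0)) +
        nfd (d + (Finsupp.single 0 0 + Finsupp.single 1 2)) +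
        nfd (d + (Finsupp.single 0 1 + Finsupp.single 1 1)) = 0 := by
      simp only [nfd, Finsupp.add_apply, Finsupp.single_apply]
      simpa using L2 (d 0) (d 1)
    rw [this, smul_zero]
  | add p q hp hq => rw [add_mul, map_add, hp, hq, add_zero]

lemma phi_ideal {x : MvPolynomial (Fin 2) (ZMod 2)} (hx : x ∈ thetaIdealF) : φ x = 0 := by
  rw [Ideal.mem_span_pair] at hx
  obtain ⟨p, q, rfl⟩ := hx
  rw [map_add, phi_mul_g1, phi_mul_g2, add_zero]

lemma psi_eq_mk (a : V6) : ψ a = Ideal.Quotient.mk thetaIdealF (Ppoly a) := rfl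

lemma psi_inj : Function.Injective ψ := by
  rw [injective_iff_map_eq_zero]
  intro a ha
  rw [psi_eq_mk, Ideal.Quotient.eq_zero_iff_mem] at ha
  have := phi_ideal ha
  rwa [phi_Ppoly] at this

def bR (i : Fin 6) : RThetaF := RThetaF.x1 ^ dva i * RThetaF.x2 ^ dvb i

lemma psi_eV (i : Fin 6) : ψ (eV i) = bR i := by
  rw [eV, psi_single, bR]
  have : monoP i = X 0 ^ dva i * X 1 ^ dvb i := (Xab _ _).symm
  rw [this, map_mul, map_pow, map_pow]
open RThetaF
lemma hrel1 : (x1 ^ 2 * x2 + x1 * x2 ^ 2 : RThetaF) = 0 := by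
  have h : Ideal.Quotient.mk thetaIdealF (X 0 ^ 2 * X 1 + X 0 * X 1 ^ 2) = 0 :=
    Ideal.Quotient.eq_zero_iff_mem.mpr (Ideal.subset_span (Set.mem_insert _ _))
  simpa [map_add, map_mul, map_pow] using h

lemma hrel2 : (x1 ^ 2 + x2 ^ 2 + x1 * x2 : RThetaF) = 0 := by
  have h : Ideal.Quotient.mk thetaIdealF (X 0 ^ 2 + X 1 ^ 2 + X 0 * X 1) = 0 :=
    Ideal.Quotient.eq_zero_iff_mem.mpr
      (Ideal.subset_span (Set.mem_insert_of_mem _ rfl))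
  simpa [map_add, map_mul, map_pow] using h

lemma add_self_R (r : RThetaF) : r + r = 0 := by
  rw [← two_smul (ZMod 2) r, show (2 : ZMod 2) = 0 from rfl, zero_smul]

def M1 : V6 →ₗ[ZMod 2] V6 where
  toFun a := ![0, a 0, 0, a 1, a 2, a 4]
  map_add' a b := by
    funext i
    fin_cases i <;>
      first
        | rfl
        | exact add_add_add_comm _ _ _ _
        | (simp [Matrix.cons_val_succ]; try ring)
  map_smul' c a := by
    funext i
    fin_cases i <;>
      first
        | rfl
        | exact (mul_add _ _ _).symm
        | (simp [Matrix.cons_val_succ]; try ring)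

def M2 : V6 →ₗ[ZMod 2] V6 where
  toFun a := ![0, 0, a 0, a 2, a 1 + a 2, a 3 + a 4]
  map_add' a b := by
    funext i
    fin_cases i <;>
      first
        | rfl
        | exact add_add_add_comm _ _ _ _
        | (simp [Matrix.cons_val_succ]; try ring)
  map_smul' c a := by
    funext i
    fin_cases i <;>
      first
        | rfl
        | exact (mul_add _ _ _).symm
        | (simp [Matrix.cons_val_succ]; try ring)

lemma mul_x1_psi (a : V6) : x1 * ψ a = ψ (M1 a) := by
  have h : ((LinearMap.mulLeft (ZMod 2) x1).comp ψ) = ψ.comp M1 := by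
    apply (Pi.basisFun (ZMod 2) (Fin 6)).ext
    intro i
    simp only [LinearMap.comp_apply, Pi.basisFun_apply, LinearMap.mulLeft_apply]
    rw [show (Pi.single i 1 : V6) = eV i from rfl, psi_eV]
    fin_cases i
    · show x1 * bR 0 = ψ (M1 (eV 0))
      rw [show M1 (eV 0) = eV 1 from by decide, psi_eV]
      show x1 * (x1 ^ 0 * x2 ^ 0) = x1 ^ 1 * x2 ^ 0; ring
    · show x1 * bR 1 = ψ (M1 (eV 1))
      rw [show M1 (eV 1) = eV 3 from by decide, psi_eV]
      show x1 * (x1 ^ 1 * x2 ^ 0) = x1 ^ 2 * x2 ^ 0; ring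
    · show x1 * bR 2 = ψ (M1 (eV 2))
      rw [show M1 (eV 2) = eV 4 from by decide, psi_eV]
      show x1 * (x1 ^ 0 * x2 ^ 1) = x1 ^ 1 * x2 ^ 1; ring
    · show x1 * bR 3 = ψ (M1 (eV 3))
      rw [show M1 (eV 3) = 0 from by decide, map_zero]
      show x1 * (x1 ^ 2 * x2 ^ 0) = 0
      linear_combination x1 * hrel2 - hrel1
    · show x1 * bR 4 = ψ (M1 (eV 4))
      rw [show M1 (eV 4) = eV 5 from by decide, psi_eV]
      show x1 * (x1 ^ 1 * x2 ^ 1) = x1 ^ 2 * x2 ^ 1; ring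
    · show x1 * bR 5 = ψ (M1 (eV 5))
      rw [show M1 (eV 5) = 0 from by decide, map_zero]
      show x1 * (x1 ^ 2 * x2 ^ 1) = 0
      linear_combination x1 * x2 * hrel2 - x2 * hrel1
  exact DFunLike.congr_fun h a

lemma mul_x2_psi (a : V6) : x2 * ψ a = ψ (M2 a) := by
  have h : ((LinearMap.mulLeft (ZMod 2) x2).comp ψ) = ψ.comp M2 := by
    apply (Pi.basisFun (ZMod 2) (Fin 6)).ext
    intro i
    simp only [LinearMap.comp_apply, Pi.basisFun_apply, LinearMap.mulLeft_apply]
    rw [show (Pi.single i 1 : V6) = eV i from rfl, psi_eV]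
    fin_cases i
    · show x2 * bR 0 = ψ (M2 (eV 0))
      rw [show M2 (eV 0) = eV 2 from by decide, psi_eV]
      show x2 * (x1 ^ 0 * x2 ^ 0) = x1 ^ 0 * x2 ^ 1; ring
    · show x2 * bR 1 = ψ (M2 (eV 1))
      rw [show M2 (eV 1) = eV 4 from by decide, psi_eV]
      show x2 * (x1 ^ 1 * x2 ^ 0) = x1 ^ 1 * x2 ^ 1; ring
    · show x2 * bR 2 = ψ (M2 (eV 2))
      rw [show M2 (eV 2) = eV 3 + eV 4 from by decide, map_add, psi_eV, psi_eV]
      show x2 * (x1 ^ 0 * x2 ^ 1) = x1 ^ 2 * x2 ^ 0 + x1 ^ 1 * x2 ^ 1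
      linear_combination hrel2 - add_self_R (x1 ^ 2 + x1 * x2)
    · show x2 * bR 3 = ψ (M2 (eV 3))
      rw [show M2 (eV 3) = eV 5 from by decide, psi_eV]
      show x2 * (x1 ^ 2 * x2 ^ 0) = x1 ^ 2 * x2 ^ 1; ring
    · show x2 * bR 4 = ψ (M2 (eV 4))
      rw [show M2 (eV 4) = eV 5 from by decide, psi_eV]
      show x2 * (x1 ^ 1 * x2 ^ 1) = x1 ^ 2 * x2 ^ 1
      linear_combination hrel1 - add_self_R (x1 ^ 2 * x2)
    · show x2 * bR 5 = ψ (M2 (eV 5))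
      rw [show M2 (eV 5) = 0 from by decide, map_zero]
      show x2 * (x1 ^ 2 * x2 ^ 1) = 0
      linear_combination (x1 + x2) * hrel1 - x1 * x2 * hrel2
  exact DFunLike.congr_fun h a

lemma psi_surj : Function.Surjective ψ := by
  intro r
  obtain ⟨p, rfl⟩ := Ideal.Quotient.mk_surjective (I := thetaIdealF) r
  suffices h : ∀ p : MvPolynomial (Fin 2) (ZMod 2),
      Ideal.Quotient.mk thetaIdealF p ∈ LinearMap.range ψ by
    obtain ⟨a, ha⟩ := h p; exact ⟨a, ha⟩
  intro p
  induction p using MvPolynomial.induction_on with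
  | C c =>
    rcases (by decide : ∀ c : ZMod 2, c = 0 ∨ c = 1) c with hc | hc <;> subst hc
    · rw [map_zero, map_zero]; exact Submodule.zero_mem _
    · rw [map_one, map_one]
      exact ⟨eV 0, by rw [psi_eV]; show x1 ^ 0 * x2 ^ 0 = 1; ring⟩
  | add p q hp hq =>
    rw [map_add]; exact Submodule.add_mem _ hp hq
  | mul_X p i hp =>
    obtain ⟨a, ha⟩ := hp
    rw [map_mul]
    fin_cases i
    · refine ⟨M1 a, ?_⟩
      have hh := mul_x1_psi a
      rw [ha] at hh
      rw [← hh]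
      exact mul_comm _ _
    · refine ⟨M2 a, ?_⟩
      have hh := mul_x2_psi a
      rw [ha] at hh
      rw [← hh]
      exact mul_comm _ _
open RThetaF


def eE : V6 ≃ₗ[ZMod 2] RThetaF := LinearEquiv.ofBijective ψ ⟨psi_inj, psi_surj⟩

instance : Module.Finite (ZMod 2) RThetaF := Module.Finite.equiv eE

lemma finrankRTh : Module.finrank (ZMod 2) RThetaF = 6 := by
  rw [← eE.finrank_eq]; simp

lemma kosZero_psi (a : V6) : kosZeroF (ψ a) = (ψ (M1 a), ψ (M2 a)) := by
  simp [kosZeroF, mul_x1_psi, mul_x2_psi]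

lemma kosOne_psi (a b : V6) : kosOneF (ψ a, ψ b) = ψ (M2 a + M1 b) := by
  simp [kosOneF, mul_x2_psi a, mul_x1_psi b]

lemma hcomp : kosOneF.comp kosZeroF = 0 := by
  apply LinearMap.ext
  intro r
  show x2 * (x1 * r) + x1 * (x2 * r) = 0
  have h : x2 * (x1 * r) = x1 * (x2 * r) := by ring
  rw [h]; exact add_self_R _

lemma ker_kosZero : LinearMap.ker kosZeroF = Submodule.span (ZMod 2) {ψ (eV 5)} := by
  apply le_antisymm
  · intro r hr
    obtain ⟨a, rfl⟩ := psi_surj r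
    rw [LinearMap.mem_ker, kosZero_psi, Prod.mk_eq_zero] at hr
    have ha1 : M1 a = 0 := psi_inj (by rw [hr.1, map_zero])
    have ha2 : M2 a = 0 := psi_inj (by rw [hr.2, map_zero])
    have key : ∀ v : V6, (![0, v 0, 0, v 1, v 2, v 4] : V6) = 0 →
        (![0, 0, v 0, v 2, v 1 + v 2, v 3 + v 4] : V6) = 0 → v = v 5 • eV 5 := by decide
    rw [show a = a 5 • eV 5 from key a ha1 ha2, map_smul]
    exact Submodule.smul_mem _ _ (Submodule.mem_span_singleton_self _)
  · rw [Submodule.span_le, Set.singleton_subset_iff]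
    show ψ (eV 5) ∈ LinearMap.ker kosZeroF
    rw [LinearMap.mem_ker, kosZero_psi, show M1 (eV 5) = 0 from by decide,
      show M2 (eV 5) = 0 from by decide, map_zero]
    rfl

lemma psi_eV5_ne : ψ (eV 5) ≠ 0 := by
  intro h
  have h0 : eV 5 = (0 : V6) := psi_inj (by rw [h, map_zero])
  exact (by decide : eV 5 ≠ (0 : V6)) h0

lemma finrank_ker_kosZero : Module.finrank (ZMod 2) ↥(LinearMap.ker kosZeroF) = 1 := by
  rw [ker_kosZero]
  exact finrank_span_singleton psi_eV5_ne

def piR : RThetaF →ₗ[ZMod 2] ZMod 2 :=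
  (LinearMap.proj (0 : Fin 6)).comp (eE.symm : RThetaF →ₗ[ZMod 2] V6)

lemma pi_psi (c : V6) : piR (ψ c) = c 0 := by
  have : eE.symm (ψ c) = c := eE.symm_apply_apply c
  simp [piR, this]

lemma range_kosOne : LinearMap.range kosOneF = LinearMap.ker piR := by
  apply le_antisymm
  · rintro r ⟨⟨s, t⟩, rfl⟩
    obtain ⟨a, rfl⟩ := psi_surj s
    obtain ⟨b, rfl⟩ := psi_surj t
    rw [LinearMap.mem_ker, kosOne_psi, pi_psi]
    rfl
  · intro r hr
    rw [LinearMap.mem_ker] at hr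
    have ha0 : (eE.symm r) 0 = 0 := hr
    set a := eE.symm r with hadef
    refine ⟨(ψ (a 2 • eV 0), ψ (a 1 • eV 0 + a 3 • eV 1 + a 4 • eV 2 + a 5 • eV 4)), ?_⟩
    rw [kosOne_psi]
    have key : ∀ v : V6, v 0 = 0 →
        M2 (v 2 • eV 0) + M1 (v 1 • eV 0 + v 3 • eV 1 + v 4 • eV 2 + v 5 • eV 4) = v := by
      decide
    rw [key a ha0]
    exact eE.apply_symm_apply r

lemma piR_surj : Function.Surjective piR := by
  intro c
  exact ⟨ψ (c • eV 0), by rw [pi_psi]; simp [eV]⟩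

lemma finrank_ker_piR : Module.finrank (ZMod 2) ↥(LinearMap.ker piR) = 5 := by
  have h := LinearMap.finrank_range_add_finrank_ker piR
  rw [finrankRTh, LinearMap.range_eq_top.mpr piR_surj, finrank_top, Module.finrank_self] at h
  omega

lemma finrank_range_kosOne : Module.finrank (ZMod 2) ↥(LinearMap.range kosOneF) = 5 := by
  rw [range_kosOne]; exact finrank_ker_piR

lemma finrank_range_kosZero : Module.finrank (ZMod 2) ↥(LinearMap.range kosZeroF) = 5 := by
  have h := LinearMap.finrank_range_add_finrank_ker kosZeroF
  rw [finrankRTh, finrank_ker_kosZero] at h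
  omega

lemma finrank_ker_kosOne : Module.finrank (ZMod 2) ↥(LinearMap.ker kosOneF) = 7 := by
  have h := LinearMap.finrank_range_add_finrank_ker kosOneF
  rw [Module.finrank_prod, finrankRTh, finrank_range_kosOne] at h
  omega

lemma finrank_coker : Module.finrank (ZMod 2) (RThetaF ⧸ LinearMap.range kosOneF) = 1 := by
  have h := Submodule.finrank_quotient_add_finrank (LinearMap.range kosOneF)
  rw [finrankRTh, finrank_range_kosOne] at h
  omega

set_option synthInstance.maxHeartbeats 400000 in
set_option maxHeartbeats 800000 in
lemma finrank_middle : Module.finrank (ZMod 2)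
    (↥(LinearMap.ker kosOneF) ⧸
      Submodule.comap (LinearMap.ker kosOneF).subtype (LinearMap.range kosZeroF)) = 2 := by
  have hle : LinearMap.range kosZeroF ≤ LinearMap.ker kosOneF :=
    LinearMap.range_le_ker_iff.mpr hcomp
  have h1 : Module.finrank (ZMod 2)
      ↥(Submodule.comap (LinearMap.ker kosOneF).subtype (LinearMap.range kosZeroF)) = 5 := by
    rw [(Submodule.comapSubtypeEquivOfLe hle).finrank_eq]
    exact finrank_range_kosZero
  have h := Submodule.finrank_quotient_add_finrank
    (Submodule.comap (LinearMap.ker kosOneF).subtype (LinearMap.range kosZeroF))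
  rw [finrank_ker_kosOne, h1] at h
  omega


set_option synthInstance.maxHeartbeats 400000 in
set_option maxHeartbeats 800000 in
/-- The Koszul complex `𝓡_Θ → 𝓡_Θ ⊕ 𝓡_Θ → 𝓡_Θ` of `(X₁, X₂)` over `𝔽₂` is a complex
(`d¹ ∘ d⁰ = 0`) whose homology groups `ker d⁰`, `ker d¹ / im d⁰` and `𝓡_Θ / im d¹`
have `𝔽₂`-dimensions `1`, `2` and `1` respectively; in particular the total homology
has `𝔽₂`-dimension `4`. -/
theorem RThetaF_koszul_homology_dims :
    kosOneF.comp kosZeroF = 0 ∧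
    Module.finrank (ZMod 2) ↥(LinearMap.ker kosZeroF) = 1 ∧
    Module.finrank (ZMod 2)
      (↥(LinearMap.ker kosOneF) ⧸
        Submodule.comap (LinearMap.ker kosOneF).subtype (LinearMap.range kosZeroF)) = 2 ∧
    Module.finrank (ZMod 2) (RThetaF ⧸ LinearMap.range kosOneF) = 1 ∧
    Module.finrank (ZMod 2)
      (↥(LinearMap.ker kosZeroF) ×
        (↥(LinearMap.ker kosOneF) ⧸
          Submodule.comap (LinearMap.ker kosOneF).subtype (LinearMap.range kosZeroF)) ×
        (RThetaF ⧸ LinearMap.range kosOneF)) = 4 := by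
  refine ⟨hcomp, finrank_ker_kosZero, finrank_middle, finrank_coker, ?_⟩
  rw [Module.finrank_prod, Module.finrank_prod, finrank_ker_kosZero, finrank_middle,
    finrank_coker]

end
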